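/- (Exact FSP schedulability test) For any preemptive FSP scheduler A and any asynchronous constrained-deadline multi-thread system τ with r subprograms on m unit-capacity processors, [0, S*_r + P) is a feasibility interval: if no thread deadline is missed by A during [0, S*_r + P) (using worst-case execution times), then no deadline is ever missed, where S*_r is given by the recurrence S*_1 = O_1, S*_j = max{O_j, O_j + ⌈(S*_{j-1} − O_j)/T_j⌉·T_j} and P = lcm of the periods. -/

import Mathlib

namespace FSPTest

/-- `S*_1 = O_1`, `S*_{j+1} = max (O_{j+1}) (O_{j+1} + ⌈(S*_j - O_{j+1})/T_{j+1}⌉·T_{j+1})`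
(0-based; `ℕ` truncated subtraction realises the `max`). -/
def Sstar (O T : ℕ → ℕ) : ℕ → ℕ
  | 0 => O 0
  | j + 1 => O (j + 1) + (Sstar O T j - O (j + 1) + T (j + 1) - 1) / T (j + 1) * T (j + 1)

/-- A thread: (subprogram index among `q^1 > ⋯ > q^r`, instance number). -/
abbrev Thread := ℕ × ℕ

def arrival (O T : ℕ → ℕ) (j : Thread) : ℕ := O j.1 + j.2 * T j.1

def work (σ : ℕ → Finset Thread) (j : Thread) (t : ℕ) : ℕ :=
  ((Finset.range t).filter (fun s => j ∈ σ s)).card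

/-- Thread `j` is active at `t`, where `exec j` is the (actual) execution time
of thread `j`. -/
def active (r : ℕ) (O T : ℕ → ℕ) (exec : Thread → ℕ)
    (σ : ℕ → Finset Thread) (j : Thread) (t : ℕ) : Prop :=
  j.1 < r ∧ arrival O T j ≤ t ∧ work σ j t < exec j

def hp (j' j : Thread) : Prop :=
  j'.1 < j.1 ∨ (j'.1 = j.1 ∧ j'.2 < j.2)

/-- Preemptive FSP schedule on `m` unit-capacity processors, for actual
execution times `exec`. -/
def isFSPSchedule (r m : ℕ) (O T : ℕ → ℕ) (exec : Thread → ℕ)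
    (σ : ℕ → Finset Thread) : Prop :=
  ∀ t : ℕ,
    (σ t).card ≤ m ∧
    (∀ j ∈ σ t, active r O T exec σ j t) ∧
    (∀ j : Thread, active r O T exec σ j t → j ∉ σ t →
      (σ t).card = m ∧ ∀ j' ∈ σ t, hp j' j)

/-! ### Basic lemmas -/

lemma work_zero (σ : ℕ → Finset Thread) (j : Thread) : work σ j 0 = 0 := by
  simp [work]

lemma work_succ (σ : ℕ → Finset Thread) (j : Thread) (t : ℕ) :
    work σ j (t + 1) = work σ j t + (if j ∈ σ t then 1 else 0) := by
  unfold work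
  rw [Finset.range_add_one, Finset.filter_insert]
  split
  · rw [Finset.card_insert_of_notMem (by simp)]
  · simp

lemma work_mono (σ : ℕ → Finset Thread) (j : Thread) {t t' : ℕ} (h : t ≤ t') :
    work σ j t ≤ work σ j t' :=
  Finset.card_le_card (Finset.filter_subset_filter _ (Finset.range_subset_range.2 h))

lemma hp_asymm {j j' : Thread} (h : hp j' j) (h' : hp j j') : False := by
  rcases h with h | ⟨h1, h2⟩ <;> rcases h' with h' | ⟨h1', h2'⟩ <;> omega

lemma hp_irrefl (j : Thread) : ¬ hp j j := fun h => hp_asymm h h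

lemma work_le {r m : ℕ} {O T : ℕ → ℕ} {exec : Thread → ℕ} {σ : ℕ → Finset Thread}
    (hσ : isFSPSchedule r m O T exec σ) (j : Thread) (t : ℕ) :
    work σ j t ≤ exec j := by
  induction t with
  | zero => simp [work]
  | succ t ih =>
    rw [work_succ]
    by_cases h : j ∈ σ t
    · have h2 : work σ j t < exec j := ((hσ t).2.1 j h).2.2
      simp only [h, if_pos]
      omega
    · simp only [h, if_neg, not_false_iff]
      omega

/-! ### `Sstar` arithmetic -/

lemma Sstar_exists_k (O T : ℕ → ℕ) : ∀ ℓ, ∃ k, Sstar O T ℓ = O ℓ + k * T ℓ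
  | 0 => ⟨0, by simp [Sstar]⟩
  | ℓ + 1 => ⟨_, rfl⟩

lemma le_Sstar (O T : ℕ → ℕ) (ℓ : ℕ) : O ℓ ≤ Sstar O T ℓ := by
  obtain ⟨k, hk⟩ := Sstar_exists_k O T ℓ
  omega

lemma ceil_le {x Tv : ℕ} (hT : 0 < Tv) : x ≤ (x + Tv - 1) / Tv * Tv := by
  by_contra h
  push_neg at h
  have h1 : ((x + Tv - 1) / Tv + 1) * Tv ≤ x + Tv - 1 := by
    rw [add_mul, one_mul]
    omega
  have h2 : (x + Tv - 1) / Tv + 1 ≤ (x + Tv - 1) / Tv :=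
    (Nat.le_div_iff_mul_le hT).2 h1
  omega

lemma Sstar_le_succ {O T : ℕ → ℕ} {ℓ : ℕ} (hT : 0 < T (ℓ + 1)) :
    Sstar O T ℓ ≤ Sstar O T (ℓ + 1) := by
  have h := ceil_le (x := Sstar O T ℓ - O (ℓ + 1)) hT
  show Sstar O T ℓ ≤ O (ℓ + 1) + _
  omega

lemma Sstar_mono {r : ℕ} {O T : ℕ → ℕ} (hT : ∀ ℓ < r, 0 < T ℓ) :
    ∀ {i ℓ : ℕ}, i ≤ ℓ → ℓ < r → Sstar O T i ≤ Sstar O T ℓ := by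
  intro i ℓ
  induction ℓ with
  | zero =>
    intro h _
    have : i = 0 := by omega
    subst this
    exact le_refl _
  | succ n ih =>
    intro h hℓ
    rcases Nat.lt_or_ge i (n + 1) with h' | h'
    · exact le_trans (ih (by omega) (by omega)) (Sstar_le_succ (hT _ hℓ))
    · have : i = n + 1 := by omega
      subst this
      exact le_refl _

/-! ### Membership characterization -/

open Classical in
noncomputable def hpActive (r : ℕ) (O T : ℕ → ℕ) (exec : Thread → ℕ)
    (σ : ℕ → Finset Thread) (j : Thread) (t : ℕ) : Finset Thread :=
  (Finset.range r ×ˢ Finset.range (t + 1)).filter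
    (fun j' => hp j' j ∧ active r O T exec σ j' t)

lemma mem_hpActive {r : ℕ} {O T : ℕ → ℕ} {exec : Thread → ℕ} {σ : ℕ → Finset Thread}
    (hT : ∀ ℓ < r, 0 < T ℓ) {j j' : Thread} {t : ℕ} :
    j' ∈ hpActive r O T exec σ j t ↔ hp j' j ∧ active r O T exec σ j' t := by
  classical
  simp only [hpActive, Finset.mem_filter, Finset.mem_product, Finset.mem_range]
  constructor
  · tauto
  · rintro ⟨h1, h2⟩
    refine ⟨⟨h2.1, ?_⟩, h1, h2⟩
    obtain ⟨hr', harr, _⟩ := h2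
    have hTpos := hT _ hr'
    have h3 : j'.2 * T j'.1 ≤ t := by
      have : O j'.1 + j'.2 * T j'.1 ≤ t := harr
      omega
    have h4 : j'.2 ≤ j'.2 * T j'.1 := Nat.le_mul_of_pos_right _ hTpos
    omega

lemma mem_sched_iff {r m : ℕ} {O T : ℕ → ℕ} {exec : Thread → ℕ} {σ : ℕ → Finset Thread}
    (hT : ∀ ℓ < r, 0 < T ℓ) (hσ : isFSPSchedule r m O T exec σ) (j : Thread) (t : ℕ) :
    j ∈ σ t ↔ active r O T exec σ j t ∧ (hpActive r O T exec σ j t).card < m := by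
  obtain ⟨hcard, hact, hfull⟩ := hσ t
  constructor
  · intro hj
    refine ⟨hact j hj, ?_⟩
    by_contra h
    push_neg at h
    have hsub : insert j (hpActive r O T exec σ j t) ⊆ σ t := by
      intro j' hj'
      rcases Finset.mem_insert.1 hj' with rfl | hj'
      · exact hj
      · rw [mem_hpActive hT] at hj'
        by_contra hmem
        exact hp_asymm hj'.1 ((hfull j' hj'.2 hmem).2 j hj)
    have h1 : j ∉ hpActive r O T exec σ j t := by
      rw [mem_hpActive hT]
      exact fun hh => hp_irrefl j hh.1
    have h2 := Finset.card_le_card hsub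
    rw [Finset.card_insert_of_notMem h1] at h2
    omega
  · rintro ⟨h1, h2⟩
    by_contra hj
    obtain ⟨hm, hall⟩ := hfull j h1 hj
    have hsub : σ t ⊆ hpActive r O T exec σ j t := fun j' hj' =>
      (mem_hpActive hT).2 ⟨hall j' hj', hact j' hj'⟩
    have h3 := Finset.card_le_card hsub
    omega

/-! ### Period facts -/

lemma T_dvd_P {r : ℕ} {T : ℕ → ℕ} {P : ℕ} (hP : P = (Finset.range r).lcm T)
    {ℓ : ℕ} (h : ℓ < r) : T ℓ ∣ P := by
  subst hP
  exact Finset.dvd_lcm (Finset.mem_range.2 h)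

lemma P_pos {r : ℕ} {T : ℕ → ℕ} {P : ℕ} (hr : 0 < r) (hT : ∀ ℓ < r, 0 < T ℓ)
    (hP : P = (Finset.range r).lcm T) : 0 < P := by
  rcases Nat.eq_zero_or_pos P with h | h
  · exfalso
    rw [h] at hP
    have h0 : (Finset.range r).lcm T = 0 := hP.symm
    rw [Finset.lcm_eq_zero_iff] at h0
    obtain ⟨ℓ, hℓ, hTℓ⟩ := h0
    simp only [Finset.coe_range, Set.mem_Iio, Finset.mem_range] at hℓ
    have := hT ℓ hℓ
    omega
  · exact h

/-! ### Jobs finished after their deadline -/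

lemma done_after {r m : ℕ} {O C D T : ℕ → ℕ} {P : ℕ} {σ : ℕ → Finset Thread}
    (hσ : isFSPSchedule r m O T (fun j => C j.1) σ)
    (hok : ∀ j : Thread, j.1 < r → arrival O T j + D j.1 ≤ Sstar O T (r - 1) + P →
      work σ j (arrival O T j + D j.1) = C j.1)
    {j : Thread} (hj : j.1 < r)
    (hd : arrival O T j + D j.1 ≤ Sstar O T (r - 1) + P) {t : ℕ}
    (ht : arrival O T j + D j.1 ≤ t) : work σ j t = C j.1 := by
  have h1 := work_le hσ j t
  have h2 := work_mono σ j ht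
  rw [hok j hj hd] at h2
  exact le_antisymm h1 h2

lemma old_arrival {r : ℕ} {O T : ℕ → ℕ} (hT : ∀ ℓ < r, 0 < T ℓ) {ℓ k : ℕ} (hℓ : ℓ < r)
    (h : O ℓ + k * T ℓ < Sstar O T ℓ) :
    O ℓ + k * T ℓ + T ℓ ≤ Sstar O T ℓ := by
  obtain ⟨k₀, hk₀⟩ := Sstar_exists_k O T ℓ
  rw [hk₀] at h ⊢
  have hTpos := hT ℓ hℓ
  have hkk : k < k₀ := by
    by_contra hh
    push_neg at hh
    have := Nat.mul_le_mul_right (T ℓ) hh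
    omega
  have h2 : (k + 1) * T ℓ ≤ k₀ * T ℓ := Nat.mul_le_mul_right _ hkk
  rw [add_mul, one_mul] at h2
  omega

/-! ### Work transfer along the period shift -/

lemma work_shift_aux {O T : ℕ → ℕ} {σ : ℕ → Finset Thread} {j j' : Thread} {t P : ℕ}
    (hPa : arrival O T j' = arrival O T j + P)
    (hmem : ∀ u, j ∈ σ u → arrival O T j ≤ u)
    (hmem' : ∀ u, j' ∈ σ u → arrival O T j' ≤ u)
    (hIH : ∀ u, arrival O T j ≤ u → u < t → (j ∈ σ u ↔ j' ∈ σ (u + P))) :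
    work σ j t = work σ j' (t + P) := by
  unfold work
  refine Finset.card_bij' (fun u _ => u + P) (fun s _ => s - P) ?_ ?_ ?_ ?_
  · intro u hu
    simp only [Finset.mem_filter, Finset.mem_range] at hu ⊢
    obtain ⟨hu1, hu2⟩ := hu
    exact ⟨by omega, (hIH u (hmem u hu2) hu1).1 hu2⟩
  · intro s hs
    simp only [Finset.mem_filter, Finset.mem_range] at hs ⊢
    obtain ⟨hs1, hs2⟩ := hs
    have h1 : arrival O T j + P ≤ s := by
      rw [← hPa]
      exact hmem' s hs2
    have h2 : s - P + P = s := by omega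
    refine ⟨by omega, ?_⟩
    rw [hIH (s - P) (by omega) (by omega), h2]
    exact hs2
  · intro u hu
    simp only [Finset.mem_filter, Finset.mem_range] at hu
    show u + P - P = u
    omega
  · intro s hs
    simp only [Finset.mem_filter, Finset.mem_range] at hs
    have h1 : arrival O T j + P ≤ s := by
      rw [← hPa]
      exact hmem' s hs.2
    show s - P + P = s
    omega

lemma hp_def {a b c d : ℕ} : hp (a, b) (c, d) ↔ (a < c ∨ (a = c ∧ b < d)) := Iff.rfl

lemma activeC_def {r : ℕ} {O T C : ℕ → ℕ} {σ : ℕ → Finset Thread} {a b t : ℕ} :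
    active r O T (fun j : Thread => C j.1) σ (a, b) t ↔
      (a < r ∧ O a + b * T a ≤ t ∧ work σ (a, b) t < C a) := Iff.rfl

/-! ### Periodicity of the worst-case schedule -/

lemma periodic {r m : ℕ} {O C D T : ℕ → ℕ} {P : ℕ} {σ : ℕ → Finset Thread}
    (hT : ∀ ℓ < r, 0 < T ℓ) (hD : ∀ ℓ < r, D ℓ ≤ T ℓ)
    (hP : P = (Finset.range r).lcm T)
    (hσ : isFSPSchedule r m O T (fun j => C j.1) σ)
    (hok : ∀ j : Thread, j.1 < r → arrival O T j + D j.1 ≤ Sstar O T (r - 1) + P →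
      work σ j (arrival O T j + D j.1) = C j.1) :
    ∀ t ℓ k, ℓ < r → Sstar O T ℓ ≤ t →
      ((ℓ, k) ∈ σ t ↔ (ℓ, k + P / T ℓ) ∈ σ (t + P)) := by
  intro t
  induction t using Nat.strong_induction_on with
  | _ t IH =>
  intro ℓ k hℓ ht
  have hSr : ∀ ℓ', ℓ' < r → Sstar O T ℓ' ≤ Sstar O T (r - 1) :=
    fun ℓ' h => Sstar_mono hT (by omega) (by omega)
  have hdiv : ∀ ℓ', ℓ' < r → P / T ℓ' * T ℓ' = P :=
    fun ℓ' h => Nat.div_mul_cancel (T_dvd_P hP h)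
  -- work equality for jobs arriving at or after `Sstar ℓ'`
  have hwork : ∀ ℓ' k', ℓ' < r → Sstar O T ℓ' ≤ O ℓ' + k' * T ℓ' →
      work σ (ℓ', k') t = work σ (ℓ', k' + P / T ℓ') (t + P) := by
    intro ℓ' k' h1 h2
    apply work_shift_aux (O := O) (T := T)
    · show O ℓ' + (k' + P / T ℓ') * T ℓ' = O ℓ' + k' * T ℓ' + P
      rw [add_mul, hdiv ℓ' h1]
      omega
    · exact fun u h => ((hσ u).2.1 _ h).2.1
    · exact fun u h => ((hσ u).2.1 _ h).2.1
    · intro u hu hut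
      exact IH u hut ℓ' k' h1 (le_trans h2 hu)
  -- the active predicate is transported one period forward
  have hACT : ∀ ℓ' k', ℓ' < r → Sstar O T ℓ' ≤ t →
      (active r O T (fun j => C j.1) σ (ℓ', k') t ↔
        active r O T (fun j => C j.1) σ (ℓ', k' + P / T ℓ') (t + P)) := by
    intro ℓ' k' h1 h2
    rw [activeC_def, activeC_def]
    by_cases h3 : Sstar O T ℓ' ≤ O ℓ' + k' * T ℓ'
    · have hw := hwork ℓ' k' h1 h3
      rw [hw, add_mul, hdiv ℓ' h1]
      constructor
      · rintro ⟨_, hb, hc⟩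
        exact ⟨h1, by omega, hc⟩
      · rintro ⟨_, hb, hc⟩
        exact ⟨h1, by omega, hc⟩
    · push_neg at h3
      have h4 := old_arrival hT h1 h3
      have hDle := hD ℓ' h1
      have hd1 : work σ (ℓ', k') t = C ℓ' :=
        done_after (j := (ℓ', k')) hσ hok h1
          (show O ℓ' + k' * T ℓ' + D ℓ' ≤ Sstar O T (r - 1) + P by
            have := hSr ℓ' h1; omega)
          (show O ℓ' + k' * T ℓ' + D ℓ' ≤ t by omega)
      have hd2 : work σ (ℓ', k' + P / T ℓ') (t + P) = C ℓ' :=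
        done_after (j := (ℓ', k' + P / T ℓ')) hσ hok h1
          (show O ℓ' + (k' + P / T ℓ') * T ℓ' + D ℓ' ≤ Sstar O T (r - 1) + P by
            rw [add_mul, hdiv ℓ' h1]
            have := hSr ℓ' h1; omega)
          (show O ℓ' + (k' + P / T ℓ') * T ℓ' + D ℓ' ≤ t + P by
            rw [add_mul, hdiv ℓ' h1]; omega)
      constructor
      · rintro ⟨_, _, hc⟩
        rw [hd1] at hc
        omega
      · rintro ⟨_, _, hc⟩
        rw [hd2] at hc
        omega
  -- the set of higher-priority active jobs is transported bijectively
  have hinj : Function.Injective (fun j' : Thread => ((j'.1, j'.2 + P / T j'.1) : Thread)) := by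
    rintro ⟨a1, a2⟩ ⟨b1, b2⟩ h
    simp only [Prod.mk.injEq] at h
    obtain ⟨h1, h2⟩ := h
    subst h1
    simp only [Prod.mk.injEq, true_and]
    omega
  have hset : hpActive r O T (fun j => C j.1) σ (ℓ, k + P / T ℓ) (t + P) =
      (hpActive r O T (fun j => C j.1) σ (ℓ, k) t).image
        (fun j' => (j'.1, j'.2 + P / T j'.1)) := by
    ext j''
    rw [Finset.mem_image]
    constructor
    · intro hj''
      rw [mem_hpActive hT] at hj''
      obtain ⟨ℓ'', k''⟩ := j''
      obtain ⟨hhp, hact⟩ := hj''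
      rw [hp_def] at hhp
      rw [activeC_def] at hact
      have hℓ'' : ℓ'' ≤ ℓ := by omega
      have hℓr : ℓ'' < r := lt_of_le_of_lt hℓ'' hℓ
      have hSt : Sstar O T ℓ'' ≤ t := le_trans (Sstar_mono hT hℓ'' hℓ) ht
      have hk'' : P / T ℓ'' ≤ k'' := by
        by_contra h5
        push_neg at h5
        have h6 : (k'' + 1) * T ℓ'' ≤ P / T ℓ'' * T ℓ'' :=
          Nat.mul_le_mul_right _ (by omega)
        rw [hdiv ℓ'' hℓr, add_mul, one_mul] at h6
        have hO := le_Sstar O T ℓ''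
        have hDle := hD ℓ'' hℓr
        have hdone : work σ (ℓ'', k'') (t + P) = C ℓ'' :=
          done_after (j := (ℓ'', k'')) hσ hok hℓr
            (show O ℓ'' + k'' * T ℓ'' + D ℓ'' ≤ Sstar O T (r - 1) + P by
              have := hSr ℓ'' hℓr; omega)
            (show O ℓ'' + k'' * T ℓ'' + D ℓ'' ≤ t + P by omega)
        have hlt := hact.2.2
        rw [hdone] at hlt
        omega
      refine ⟨(ℓ'', k'' - P / T ℓ''), ?_, ?_⟩
      · rw [mem_hpActive hT]
        constructor
        · rw [hp_def]
          rcases hhp with h | ⟨h, h'⟩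
          · exact Or.inl h
          · subst h
            exact Or.inr ⟨rfl, by omega⟩
        · apply (hACT ℓ'' (k'' - P / T ℓ'') hℓr hSt).2
          rw [show k'' - P / T ℓ'' + P / T ℓ'' = k'' from by omega]
          rw [activeC_def]
          exact hact
      · show ((ℓ'', k'' - P / T ℓ'' + P / T ℓ'') : Thread) = (ℓ'', k'')
        rw [show k'' - P / T ℓ'' + P / T ℓ'' = k'' from by omega]
    · rintro ⟨⟨ℓ', k'⟩, hj', rfl⟩
      show ((ℓ', k' + P / T ℓ') : Thread) ∈ hpActive r O T (fun j => C j.1) σ (ℓ, k + P / T ℓ) (t + P)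
      rw [mem_hpActive hT] at hj' ⊢
      obtain ⟨hhp, hact⟩ := hj'
      rw [hp_def] at hhp
      have hℓ' : ℓ' ≤ ℓ := by omega
      have hℓr : ℓ' < r := lt_of_le_of_lt hℓ' hℓ
      have hSt : Sstar O T ℓ' ≤ t := le_trans (Sstar_mono hT hℓ' hℓ) ht
      constructor
      · rw [hp_def]
        rcases hhp with h | ⟨h, h'⟩
        · exact Or.inl h
        · subst h
          exact Or.inr ⟨rfl, by omega⟩
      · exact (hACT ℓ' k' hℓr hSt).1 hact
  have hcard : (hpActive r O T (fun j => C j.1) σ (ℓ, k) t).card =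
      (hpActive r O T (fun j => C j.1) σ (ℓ, k + P / T ℓ) (t + P)).card := by
    rw [hset, Finset.card_image_of_injective _ hinj]
  rw [mem_sched_iff hT hσ, mem_sched_iff hT hσ]
  exact and_congr (hACT ℓ k hℓ ht) (by rw [hcard])

lemma work_shift {r m : ℕ} {O C D T : ℕ → ℕ} {P : ℕ} {σ : ℕ → Finset Thread}
    (hT : ∀ ℓ < r, 0 < T ℓ) (hD : ∀ ℓ < r, D ℓ ≤ T ℓ)
    (hP : P = (Finset.range r).lcm T)
    (hσ : isFSPSchedule r m O T (fun j => C j.1) σ)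
    (hok : ∀ j : Thread, j.1 < r → arrival O T j + D j.1 ≤ Sstar O T (r - 1) + P →
      work σ j (arrival O T j + D j.1) = C j.1)
    (t ℓ k : ℕ) (hℓ : ℓ < r) (hk : Sstar O T ℓ ≤ O ℓ + k * T ℓ) :
    work σ (ℓ, k) t = work σ (ℓ, k + P / T ℓ) (t + P) := by
  have hdiv : P / T ℓ * T ℓ = P := Nat.div_mul_cancel (T_dvd_P hP hℓ)
  apply work_shift_aux (O := O) (T := T)
  · show O ℓ + (k + P / T ℓ) * T ℓ = O ℓ + k * T ℓ + P
    rw [add_mul, hdiv]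
    omega
  · exact fun u h => ((hσ u).2.1 _ h).2.1
  · exact fun u h => ((hσ u).2.1 _ h).2.1
  · intro u hu _
    exact periodic hT hD hP hσ hok u ℓ k hℓ (le_trans hk hu)

lemma all_deadlines {r m : ℕ} {O C D T : ℕ → ℕ} {P : ℕ} {σ : ℕ → Finset Thread}
    (hr : 0 < r) (hT : ∀ ℓ < r, 0 < T ℓ) (hD : ∀ ℓ < r, D ℓ ≤ T ℓ)
    (hP : P = (Finset.range r).lcm T)
    (hσ : isFSPSchedule r m O T (fun j => C j.1) σ)
    (hok : ∀ j : Thread, j.1 < r → arrival O T j + D j.1 ≤ Sstar O T (r - 1) + P →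
      work σ j (arrival O T j + D j.1) = C j.1) :
    ∀ k ℓ, ℓ < r → work σ (ℓ, k) (O ℓ + k * T ℓ + D ℓ) = C ℓ := by
  intro k
  induction k using Nat.strong_induction_on with
  | _ k IH =>
  intro ℓ hℓ
  by_cases hwin : O ℓ + k * T ℓ + D ℓ ≤ Sstar O T (r - 1) + P
  · exact hok (ℓ, k) hℓ hwin
  · push_neg at hwin
    obtain ⟨k₀, hk₀⟩ := Sstar_exists_k O T ℓ
    have hdiv : P / T ℓ * T ℓ = P := Nat.div_mul_cancel (T_dvd_P hP hℓ)
    have hTpos := hT ℓ hℓ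
    have hPpos : 0 < P := P_pos hr hT hP
    have hppos : 0 < P / T ℓ :=
      Nat.div_pos (Nat.le_of_dvd hPpos (T_dvd_P hP hℓ)) hTpos
    have hSle : Sstar O T ℓ ≤ Sstar O T (r - 1) := Sstar_mono hT (by omega) (by omega)
    have hDle := hD ℓ hℓ
    have hk : k₀ + P / T ℓ ≤ k := by
      by_contra h
      push_neg at h
      have h1 : (k + 1) * T ℓ ≤ (k₀ + P / T ℓ) * T ℓ := Nat.mul_le_mul_right _ h
      rw [add_mul, add_mul, one_mul, hdiv] at h1
      omega
    have hk'lt : k - P / T ℓ < k := by omega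
    have harr' : Sstar O T ℓ ≤ O ℓ + (k - P / T ℓ) * T ℓ := by
      rw [hk₀]
      have h2 : k₀ ≤ k - P / T ℓ := by omega
      have := Nat.mul_le_mul_right (T ℓ) h2
      omega
    have hshift := work_shift hT hD hP hσ hok
      (O ℓ + (k - P / T ℓ) * T ℓ + D ℓ) ℓ (k - P / T ℓ) hℓ harr'
    have e1 : k - P / T ℓ + P / T ℓ = k := by omega
    have e2 : O ℓ + (k - P / T ℓ) * T ℓ + D ℓ + P = O ℓ + k * T ℓ + D ℓ := by
      have h3 : (k - P / T ℓ + P / T ℓ) * T ℓ = k * T ℓ := by rw [e1]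
      rw [add_mul, hdiv] at h3
      omega
    rw [e1, e2] at hshift
    rw [← hshift]
    exact IH (k - P / T ℓ) hk'lt ℓ hℓ

/-! ### Predictability -/

lemma predict {r m : ℕ} {O C T : ℕ → ℕ} {σ : ℕ → Finset Thread}
    (hσ : isFSPSchedule r m O T (fun j => C j.1) σ)
    {c : Thread → ℕ} (hc : ∀ j, c j ≤ C j.1)
    {σ' : ℕ → Finset Thread} (hσ' : isFSPSchedule r m O T c σ') :
    ∀ t j, work σ j t + c j ≤ work σ' j t + C j.1 := by
  intro t
  induction t with
  | zero =>
    intro j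
    rw [work_zero, work_zero]
    simpa using hc j
  | succ t ih =>
    intro j
    rw [work_succ, work_succ]
    by_cases h1 : j ∈ σ t
    · have hactσ := (hσ t).2.1 j h1
      have hwlt : work σ j t < C j.1 := hactσ.2.2
      by_cases h2 : j ∈ σ' t
      · have := ih j
        simp only [h1, h2, if_pos]
        omega
      · by_cases h3 : active r O T c σ' j t
        · exfalso
          obtain ⟨hm, hall⟩ := (hσ' t).2.2 j h3 h2
          have hsub : insert j (σ' t) ⊆ σ t := by
            intro j' hj'
            rcases Finset.mem_insert.1 hj' with rfl | hj'
            · exact h1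
            · by_contra hmem
              have hact' := (hσ' t).2.1 j' hj'
              have hwc : work σ' j' t < c j' := hact'.2.2
              have hih := ih j'
              have hwj' : work σ j' t < C j'.1 := by omega
              have hactC : active r O T (fun j => C j.1) σ j' t :=
                ⟨hact'.1, hact'.2.1, hwj'⟩
              have hj'full := ((hσ t).2.2 j' hactC hmem).2 j h1
              exact hp_asymm (hall j' hj') hj'full
          have h4 := Finset.card_le_card hsub
          rw [Finset.card_insert_of_notMem h2] at h4
          have h5 := (hσ t).1
          omega
        · have hge : c j ≤ work σ' j t := by
            by_contra hlt
            push_neg at hlt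
            exact h3 ⟨hactσ.1, hactσ.2.1, hlt⟩
          have := ih j
          simp only [h1, h2, if_pos, if_neg, not_false_iff]
          omega
    · have := ih j
      have hm' := work_mono σ' j (Nat.le_succ t)
      rw [work_succ] at hm'
      simp only [h1, if_neg, not_false_iff]
      by_cases h2 : j ∈ σ' t <;> simp only [h2, if_pos, if_neg, not_false_iff] <;> omega

/-- **Exact FSP schedulability test.**  For any asynchronous constrained-deadline
multi-thread system with `r` subprograms `q^1 > ⋯ > q^r` on `m` unit-capacity
processors, `[0, S*_r + P)` is a feasibility interval: if the FSP schedule with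
worst-case execution times `C` misses no thread deadline in `[0, S*_r + P)`,
then for any actual execution times never exceeding the worst case, no deadline
is ever missed. -/
theorem exact_FSP_schedulability_test
    (r m : ℕ) (hr : 0 < r) (O C D T : ℕ → ℕ)
    (hT : ∀ ℓ < r, 0 < T ℓ) (hD : ∀ ℓ < r, D ℓ ≤ T ℓ)
    (P : ℕ) (hP : P = (Finset.range r).lcm T)
    -- the worst-case schedule
    (σ : ℕ → Finset Thread)
    (hσ : isFSPSchedule r m O T (fun j => C j.1) σ)
    -- no deadline missed in the feasibility interval `[0, S*_r + P)`
    (hok : ∀ j : Thread, j.1 < r → arrival O T j + D j.1 ≤ Sstar O T (r - 1) + P →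
      work σ j (arrival O T j + D j.1) = C j.1) :
    -- then no deadline is ever missed, for any actual execution times `≤ C`
    ∀ (c : Thread → ℕ), (∀ j : Thread, c j ≤ C j.1) →
      ∀ (σ' : ℕ → Finset Thread), isFSPSchedule r m O T c σ' →
        ∀ j : Thread, j.1 < r → work σ' j (arrival O T j + D j.1) = c j := by
  intro c hc σ' hσ' j hj
  obtain ⟨ℓ, k⟩ := j
  show work σ' (ℓ, k) (arrival O T (ℓ, k) + D ℓ) = c (ℓ, k)
  have harr : arrival O T (ℓ, k) = O ℓ + k * T ℓ := rfl
  have h1 : work σ (ℓ, k) (arrival O T (ℓ, k) + D ℓ) = C ℓ := by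
    rw [harr]
    exact all_deadlines hr hT hD hP hσ hok k ℓ hj
  have h2 := predict hσ hc hσ' (arrival O T (ℓ, k) + D ℓ) (ℓ, k)
  have h3 := work_le hσ' (ℓ, k) (arrival O T (ℓ, k) + D ℓ)
  have h4 : C (ℓ, k).1 = C ℓ := rfl
  rw [h4, h1] at h2
  omega

end FSPTest
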